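/- arXiv:2201.08814 — 6 statements merged into one kernel-verified Lean document; each statement's English description precedes it below -/
import Mathlib

section
/- Let G be a finite directed graph whose edge orientation is acyclic and which contains no directed path with k edges. Then the underlying undirected graph of G is k-colourable (properly, i.e., its chromatic number is at most k). -/
/-- The underlying undirected simple graph of a directed graph given by a relation `A`. -/
def underlyingGraph {V : Type*} (A : V → V → Prop) : SimpleGraph V where
  Adj u v := u ≠ v ∧ (A u v ∨ A v u)
  symm := ⟨fun u v h => ⟨h.1.symm, h.2.symm⟩⟩
  loopless := ⟨fun v h => h.1 rfl⟩

/-- A directed graph with an acyclic orientation and no directed path with `k` edges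
has `k`-colourable underlying undirected graph. -/
theorem stmt0 {V : Type*} [Fintype V] (A : V → V → Prop)
    (hacyc : ∀ v : V, ¬ Relation.TransGen A v v) (k : ℕ)
    (hnopath : ¬ ∃ l : List V, l.Chain' A ∧ l.Nodup ∧ l.length = k + 1) :
    (underlyingGraph A).Colorable k := by
  classical
  -- Every chain is nodup
  have hnodup : ∀ l : List V, l.Chain' A → l.Nodup := by
    intro l hl
    have h1 : l.Chain' (Relation.TransGen A) := hl.imp fun a b h => Relation.TransGen.single h
    have h2 : l.Pairwise (Relation.TransGen A) := List.isChain_iff_pairwise.mp h1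
    refine List.Pairwise.imp ?_ h2
    intro a b h heq
    exact hacyc a (heq ▸ h)
  -- Every chain has length ≤ k
  have hbound : ∀ l : List V, l.Chain' A → l.length ≤ k := by
    intro l hl
    by_contra hlen
    push_neg at hlen
    refine hnopath ⟨l.take (k + 1), hl.take _, hnodup _ (hl.take _), ?_⟩
    simp [List.length_take]; omega
  -- colour function
  set P : V → ℕ → Prop := fun v n => ∃ l : List V, l.Chain' A ∧ l.head? = some v ∧ l.length = n + 1 with hP
  have hP0 : ∀ v, P v 0 := fun v => ⟨[v], List.isChain_singleton v, rfl, rfl⟩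
  set c : V → ℕ := fun v => Nat.findGreatest (P v) k with hc
  have hPc : ∀ v, P v (c v) := fun v => Nat.findGreatest_spec (Nat.zero_le k) (hP0 v)
  have hclt : ∀ v, c v < k := by
    intro v
    obtain ⟨l, hl, -, hlen⟩ := hPc v
    have := hbound l hl
    omega
  have hmono : ∀ u v, A u v → c v < c u := by
    intro u v huv
    obtain ⟨l, hl, hhd, hlen⟩ := hPc v
    have hchain : (u :: l).Chain' A := by
      refine List.isChain_cons.mpr ?_
      exact ⟨fun b hb => by rw [hhd] at hb; exact (Option.mem_some_iff.mp hb) ▸ huv, hl⟩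
    have hPu : P u (c v + 1) := ⟨u :: l, hchain, rfl, by simp [hlen]⟩
    have hle : c v + 1 ≤ k := by
      have h2 := hbound _ hchain
      rw [List.length_cons, hlen] at h2
      omega
    have h3 : c v + 1 ≤ c u := Nat.le_findGreatest hle hPu
    omega
  refine ⟨fun v => ⟨c v, hclt v⟩, ?_⟩
  intro u v huv heq
  have hcc : c u = c v := congrArg Fin.val heq
  rcases huv.2 with h | h
  · exact absurd hcc.symm (Nat.ne_of_lt (hmono u v h))
  · exact absurd hcc (Nat.ne_of_lt (hmono v u h))
end

section
/- Let p be prime and n an integer with 1 ≤ n ≤ p-1. Then there is a partition of {1,...,p-1} into at most n(n+1)/2 sets A_1, ..., A_t such that for every i and every m with 1 ≤ m ≤ n, no m (not necessarily distinct) elements of A_i have sum divisible by p. -/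
noncomputable def stmt2Q (n : ℕ) : Finset ℚ :=
  (Finset.Icc 1 n).biUnion fun b => (Finset.range b).image fun a : ℕ => (a : ℚ) / b

lemma stmt2Q_card (n : ℕ) : (stmt2Q n).card ≤ n * (n + 1) / 2 := by
  have h2 : (∑ b ∈ Finset.Icc 1 n, b) * 2 = n * (n + 1) := by
    induction n with
    | zero => simp
    | succ k ih =>
        rw [Finset.sum_Icc_succ_top (by omega), add_mul, ih]
        ring
  calc (stmt2Q n).card
      ≤ ∑ b ∈ Finset.Icc 1 n, ((Finset.range b).image fun a : ℕ => (a : ℚ) / b).card :=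
        Finset.card_biUnion_le
    _ ≤ ∑ b ∈ Finset.Icc 1 n, b :=
        Finset.sum_le_sum fun b _ => (Finset.card_image_le).trans_eq (Finset.card_range b)
    _ = n * (n + 1) / 2 := by omega

lemma stmt2Q_mem {n : ℕ} {q : ℚ} (h0 : 0 ≤ q) (h1 : q < 1) (hd : q.den ≤ n) : q ∈ stmt2Q n := by
  have hnum : q.num < q.den := by
    have := q.num_div_den
    rw [← this, div_lt_one (by exact_mod_cast q.pos)] at h1
    exact_mod_cast h1
  have hn0 : 0 ≤ q.num := Rat.num_nonneg.2 h0
  apply Finset.mem_biUnion.2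
  refine ⟨q.den, Finset.mem_Icc.2 ⟨q.pos, hd⟩, Finset.mem_image.2 ⟨q.num.toNat, ?_, ?_⟩⟩
  · exact Finset.mem_range.2 (by omega)
  · have hc : ((q.num.toNat : ℕ) : ℚ) = (q.num : ℚ) := by
      exact_mod_cast congrArg (Int.cast : ℤ → ℚ) (Int.toNat_of_nonneg hn0)
    rw [hc]
    exact q.num_div_den

/-- The largest rational `q` with denominator `≤ n` satisfying `0 ≤ q < x/p`. -/
noncomputable def stmt2f (p n x : ℕ) : ℚ :=
  WithBot.unbotD 0 (((stmt2Q n).filter fun q => q < (x : ℚ) / p).max)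

lemma stmt2f_nonempty {p n x : ℕ} (hn : 1 ≤ n) (hp : 0 < p) (hx : 1 ≤ x) :
    ((stmt2Q n).filter fun q => q < (x : ℚ) / p).Nonempty := by
  refine ⟨0, Finset.mem_filter.2 ⟨stmt2Q_mem le_rfl one_pos (by simp [hn]), ?_⟩⟩
  positivity

lemma stmt2f_mem {p n x : ℕ} (hn : 1 ≤ n) (hp : 0 < p) (hx : 1 ≤ x) :
    stmt2f p n x ∈ stmt2Q n ∧ stmt2f p n x < (x : ℚ) / p := by
  have hne := stmt2f_nonempty (p := p) hn hp hx
  have : stmt2f p n x = _root_.Finset.max' _ hne := by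
    rw [stmt2f, ← Finset.coe_max' hne, WithBot.unbotD_coe]
  rw [this]
  exact Finset.mem_filter.1 (Finset.max'_mem _ hne)

lemma stmt2f_le {p n x : ℕ} {q : ℚ} (hq : q ∈ stmt2Q n) (hlt : q < (x : ℚ) / p) :
    q ≤ stmt2f p n x := by
  have hmem : q ∈ (stmt2Q n).filter fun q => q < (x : ℚ) / p := Finset.mem_filter.2 ⟨hq, hlt⟩
  have hne : ((stmt2Q n).filter fun q => q < (x : ℚ) / p).Nonempty := ⟨q, hmem⟩
  have : stmt2f p n x = _root_.Finset.max' _ hne := by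
    rw [stmt2f, ← Finset.coe_max' hne, WithBot.unbotD_coe]
  rw [this]
  exact Finset.le_max' _ _ hmem

/-- For prime `p` and `1 ≤ n ≤ p-1`, the set `{1, …, p-1}` can be partitioned into at most
`n(n+1)/2` sets such that for every part and every `m ≤ n`, no `m` (not necessarily
distinct) elements of that part have sum divisible by `p`. -/
theorem stmt2 (p n : ℕ) (hp : p.Prime) (hn1 : 1 ≤ n) (hnp : n ≤ p - 1) :
    ∃ (t : ℕ) (A : Fin t → Finset ℕ),
      t ≤ n * (n + 1) / 2 ∧
      (∀ i j : Fin t, i ≠ j → Disjoint (A i) (A j)) ∧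
      (Finset.univ.biUnion A = Finset.Icc 1 (p - 1)) ∧
      (∀ i : Fin t, ∀ m : ℕ, 1 ≤ m → m ≤ n →
        ∀ g : Fin m → ℕ, (∀ j, g j ∈ A i) → ¬ p ∣ ∑ j, g j) := by
  have hp1 : 1 < p := hp.one_lt
  have hp0 : 0 < p := by omega
  set f : ℕ → ℚ := fun x => stmt2f p n x with hfdef
  set V : Finset ℚ := (Finset.Icc 1 (p - 1)).image f with hVdef
  set e := V.equivFin with hedef
  refine ⟨V.card, fun i => (Finset.Icc 1 (p - 1)).filter fun x => f x = (e.symm i : ℚ),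
    ?_, ?_, ?_, ?_⟩
  · -- cardinality bound
    refine le_trans (Finset.card_le_card ?_) (stmt2Q_card n)
    intro q hq
    obtain ⟨x, hx, rfl⟩ := Finset.mem_image.1 hq
    exact (stmt2f_mem hn1 hp0 (Finset.mem_Icc.1 hx).1).1
  · -- disjointness
    intro i j hij
    rw [Finset.disjoint_left]
    intro x hxi hxj
    have h1 := (Finset.mem_filter.1 hxi).2
    have h2 := (Finset.mem_filter.1 hxj).2
    exact hij (e.symm.injective (Subtype.ext (h1 ▸ h2 ▸ rfl)))
  · -- union
    ext x
    simp only [Finset.mem_biUnion, Finset.mem_univ, true_and]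
    constructor
    · rintro ⟨i, hi⟩
      exact (Finset.mem_filter.1 hi).1
    · intro hx
      have hfV : f x ∈ V := Finset.mem_image_of_mem f hx
      refine ⟨e ⟨f x, hfV⟩, Finset.mem_filter.2 ⟨hx, ?_⟩⟩
      rw [Equiv.symm_apply_apply]
  · -- main property
    intro i m hm1 hmn g hg hdvd
    obtain ⟨k, hk⟩ := hdvd
    set c : ℚ := (e.symm i : ℚ) with hcdef
    have hgmem : ∀ j, g j ∈ Finset.Icc 1 (p - 1) := fun j => (Finset.mem_filter.1 (hg j)).1
    have hgf : ∀ j, f (g j) = c := fun j => (Finset.mem_filter.1 (hg j)).2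
    have hgb : ∀ j, 1 ≤ g j ∧ g j ≤ p - 1 := fun j => Finset.mem_Icc.1 (hgmem j)
    have hclt : ∀ j, c < (g j : ℚ) / p := fun j =>
      (hgf j) ▸ (stmt2f_mem hn1 hp0 (hgb j).1).2
    have hcQ : c ∈ stmt2Q n := (hgf ⟨0, hm1⟩) ▸ (stmt2f_mem hn1 hp0 (hgb ⟨0, hm1⟩).1).1
    -- sum of (g j)/p equals k
    have hsum : ∑ j, (g j : ℚ) / p = (k : ℚ) := by
      rw [← Finset.sum_div]
      rw [show (∑ j, ((g j : ℚ))) = ((∑ j, g j : ℕ) : ℚ) by push_cast; rfl, hk]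
      push_cast
      field_simp
    have hk1 : 1 ≤ k := by
      have : m ≤ ∑ j, g j := by
        calc m = ∑ _j : Fin m, 1 := by simp
          _ ≤ ∑ j, g j := Finset.sum_le_sum fun j _ => (hgb j).1
      nlinarith [hk]
    have hm0 : (0 : ℚ) < m := by exact_mod_cast hm1
    have huniv : (Finset.univ : Finset (Fin m)).Nonempty := ⟨⟨0, hm1⟩, Finset.mem_univ _⟩
    have hmc : (m : ℚ) * c < k := by
      calc (m : ℚ) * c = ∑ _j : Fin m, c := by simp [mul_comm]
        _ < ∑ j, (g j : ℚ) / p := Finset.sum_lt_sum_of_nonempty huniv fun j _ => hclt j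
        _ = k := hsum
    set r : ℚ := (k : ℚ) / m with hrdef
    have hcr : c < r := by rw [hrdef, lt_div_iff₀ hm0]; linarith
    have hne : ∀ j, (g j : ℚ) / p ≠ r := by
      intro j heq
      rw [hrdef, div_eq_div_iff (by exact_mod_cast hp0.ne' : (p:ℚ) ≠ 0) (by exact_mod_cast (by omega : m ≠ 0) : (m:ℚ) ≠ 0)] at heq
      have heqn : g j * m = k * p := by exact_mod_cast heq
      have hdvd : p ∣ g j * m := ⟨k, by linarith [heqn]⟩
      obtain ⟨hb1, hb2⟩ := hgb j
      rcases (Nat.Prime.dvd_mul hp).1 hdvd with h | h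
      · have := Nat.le_of_dvd (by omega) h
        omega
      · have := Nat.le_of_dvd (by omega) h
        omega
    have hex : ∃ j, r < (g j : ℚ) / p := by
      by_contra hcon
      push_neg at hcon
      have hlt : ∀ j, (g j : ℚ) / p < r := fun j => lt_of_le_of_ne (hcon j) (hne j)
      have : (k : ℚ) < (m : ℚ) * r := by
        calc (k : ℚ) = ∑ j, (g j : ℚ) / p := hsum.symm
          _ < ∑ _j : Fin m, r := Finset.sum_lt_sum_of_nonempty huniv fun j _ => hlt j
          _ = (m : ℚ) * r := by simp [mul_comm]
      rw [hrdef] at this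
      field_simp at this
      exact lt_irrefl _ this
    obtain ⟨j0, hj0⟩ := hex
    have hrQ : r ∈ stmt2Q n := by
      apply stmt2Q_mem
      · positivity
      · have h1 : (g j0 : ℚ) / p < 1 := by
          obtain ⟨hb1, hb2⟩ := hgb j0
          rw [div_lt_one (by exact_mod_cast hp0)]
          exact_mod_cast (by omega : g j0 < p)
        linarith
      · have hr2 : r = Rat.divInt (k : ℤ) (m : ℤ) := by
          rw [Rat.divInt_eq_div, hrdef]; push_cast; ring
        have hdd : ((r.den : ℤ)) ∣ (m : ℤ) := by
          rw [hr2]; exact Rat.den_dvd _ _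
        have : r.den ∣ m := by exact_mod_cast hdd
        exact le_trans (Nat.le_of_dvd (by omega) this) hmn
    have : r ≤ f (g j0) := stmt2f_le hrQ hj0
    rw [hgf j0] at this
    linarith
end

section
/- Let G be a finite directed acyclic graph with at most one directed path between any pair of vertices, with reachability order ≤ and path-length function d. Let p be prime, let G' be the graph with edges {uv : u < v, d(u,v) ≢ 0 mod p}, and let H be an induced subgraph of G' with clique number n < p. Then the chromatic number of H is at most n^(n(n+1)/2). -/
/-- `l` is a directed path from `u` to `v` in the digraph `A`. -/
def DiPathFrom {V : Type*} (A : V → V → Prop) (l : List V) (u v : V) : Prop :=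
  l.Chain' A ∧ l.Nodup ∧ l.head? = some u ∧ l.getLast? = some v

/-- Directed reachability: there is a directed path from `u` to `v`. -/
def Reach {V : Type*} (A : V → V → Prop) (u v : V) : Prop :=
  ∃ l : List V, DiPathFrom A l u v

section Aux
variable {V : Type*} {A : V → V → Prop}

lemma transGen_of_chain' :
    ∀ (l : List V) (a x : V), l.Chain' A → l.head? = some a → x ∈ l →
      x = a ∨ Relation.TransGen A a x := by
  intro l
  induction l with
  | nil => intro a x _ h _; simp at h
  | cons b t ih =>
    intro a x hc h hx
    obtain rfl : b = a := by simpa using h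
    rcases List.mem_cons.mp hx with rfl | hx
    · exact Or.inl rfl
    cases t with
    | nil => simp at hx
    | cons c t' =>
      unfold List.Chain' at hc; rw [List.isChain_cons_cons] at hc
      rcases ih c x hc.2 rfl hx with rfl | h2
      · exact Or.inr (.single hc.1)
      · exact Or.inr ((Relation.TransGen.single hc.1).trans h2)

lemma transGen_to_getLast {l : List V} {b x : V}
    (hc : l.Chain' A) (h : l.getLast? = some b) (hx : x ∈ l) :
    x = b ∨ Relation.TransGen A x b := by
  have hc' : l.reverse.Chain' (flip A) := List.isChain_reverse.mpr hc
  have hh : l.reverse.head? = some b := by rwa [List.head?_reverse]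
  rcases transGen_of_chain' l.reverse b x hc' hh (by simpa using hx) with rfl | h2
  · exact Or.inl rfl
  · exact Or.inr (Relation.transGen_swap.mpr h2)

lemma reach_refl (u : V) : Reach A u u :=
  ⟨[u], List.isChain_singleton u, List.nodup_singleton u, rfl, rfl⟩

lemma reach_transGen {u v : V} (h : Reach A u v) : u = v ∨ Relation.TransGen A u v := by
  obtain ⟨l, hc, _, hh, hl⟩ := h
  have hv : v ∈ l := by
    cases l with
    | nil => simp at hh
    | cons a t => exact List.mem_of_mem_getLast? hl
  rcases transGen_of_chain' l u v hc hh hv with rfl | h2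
  · exact Or.inl rfl
  · exact Or.inr h2

lemma reach_trans_add (hacyc : ∀ x : V, ¬ Relation.TransGen A x x)
    (d : V → V → ℕ)
    (hd : ∀ (u v : V) (l : List V), DiPathFrom A l u v → l.length = d u v + 1)
    {u v w : V} (h1 : Reach A u v) (h2 : Reach A v w) :
    Reach A u w ∧ d u w = d u v + d v w := by
  obtain ⟨l₁, hp1⟩ := h1
  obtain ⟨l₂, hp2⟩ := h2
  obtain ⟨hc1, hn1, hh1, hl1⟩ := hp1
  obtain ⟨hc2, hn2, hh2, hl2⟩ := hp2
  have hsplit : l₁.dropLast ++ [v] = l₁ := List.dropLast_append_getLast? v hl1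
  have hcsplit : l₁.dropLast.Chain' A ∧ ∀ x ∈ l₁.dropLast.getLast?, ∀ y ∈ ([v] : List V).head?, A x y := by
    have := hc1; unfold List.Chain' at this; rw [← hsplit, List.isChain_append] at this
    exact ⟨this.1, this.2.2⟩
  have hnsplit : l₁.dropLast.Nodup ∧ v ∉ l₁.dropLast := by
    have := hn1; rw [← hsplit, List.nodup_append] at this
    exact ⟨this.1, fun hv => this.2.2 v hv v (by simp) rfl⟩
  have hdisj : ∀ x ∈ l₁.dropLast, x ∉ l₂ := by
    intro x hx hx2
    have hxv : x ≠ v := fun h => hnsplit.2 (h ▸ hx)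
    have hxl1 : x ∈ l₁ := by rw [← hsplit]; exact List.mem_append_left _ hx
    have t1 : Relation.TransGen A x v := by
      rcases transGen_to_getLast hc1 hl1 hxl1 with rfl | t
      · exact absurd rfl hxv
      · exact t
    have t2 : Relation.TransGen A v x := by
      rcases transGen_of_chain' l₂ v x hc2 hh2 hx2 with rfl | t
      · exact absurd rfl hxv
      · exact t
    exact hacyc x (t1.trans t2)
  have hl2ne : l₂ ≠ [] := by rintro rfl; simp at hh2
  have hpath : DiPathFrom A (l₁.dropLast ++ l₂) u w := by
    refine ⟨?_, ?_, ?_, ?_⟩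
    · unfold List.Chain'; rw [List.isChain_append]
      refine ⟨hcsplit.1, hc2, ?_⟩
      intro x hx y hy
      rw [hh2, Option.mem_some_iff] at hy
      subst hy
      exact hcsplit.2 x hx v (by simp)
    · rw [List.nodup_append]
      exact ⟨hnsplit.1, hn2, fun a ha b hb hab => hdisj a ha (hab ▸ hb)⟩
    · rcases e : l₁.dropLast with _ | ⟨x, t⟩
      · have : l₁ = [v] := by rw [← hsplit, e]; rfl
        rw [this] at hh1
        obtain rfl : v = u := by simpa using hh1
        simpa [e] using hh2
      · have : l₁.head? = some x := by rw [← hsplit, e]; rfl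
        rw [hh1] at this
        obtain rfl : x = u := by simpa using this.symm
        simp [e]
    · rw [List.getLast?_append_of_ne_nil _ hl2ne]; exact hl2
  have len1 : l₁.length = d u v + 1 := hd u v l₁ ⟨hc1, hn1, hh1, hl1⟩
  have len2 : l₂.length = d v w + 1 := hd v w l₂ ⟨hc2, hn2, hh2, hl2⟩
  have lenl : (l₁.dropLast ++ l₂).length = d u w + 1 := hd u w _ hpath
  have hlen1 : l₁.dropLast.length = l₁.length - 1 := List.length_dropLast
  have hne1 : l₁ ≠ [] := by rintro rfl; simp at hh1
  have : 1 ≤ l₁.length := List.length_pos_iff.mpr hne1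
  refine ⟨⟨_, hpath⟩, ?_⟩
  rw [List.length_append] at lenl
  omega

lemma d_self (d : V → V → ℕ)
    (hd : ∀ (u v : V) (l : List V), DiPathFrom A l u v → l.length = d u v + 1)
    (u : V) : d u u = 0 := by
  have := hd u u [u] ⟨List.isChain_singleton u, List.nodup_singleton u, rfl, rfl⟩
  simpa using this.symm

end Aux

def Cset (n : ℕ) : Finset ℚ :=
  (Finset.Icc 1 n).biUnion fun b => (Finset.range b).image fun a : ℕ => (a : ℚ) / (b : ℚ)

noncomputable def bestQ (n p r : ℕ) : ℚ :=
  WithBot.unbotD 0 (((Cset n).filter fun q => q < (r : ℚ) / p).max)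

lemma Cset_card (n : ℕ) : (Cset n).card ≤ n * (n + 1) / 2 := by
  have h2 : ∀ m : ℕ, ∑ b ∈ Finset.Icc 1 m, b = ∑ i ∈ Finset.range (m + 1), i := by
    intro m
    induction m with
    | zero => simp
    | succ k ih => rw [Finset.sum_range_succ, Finset.sum_Icc_succ_top (by omega), ih]
  refine le_trans Finset.card_biUnion_le ?_
  have h1 : ∑ b ∈ Finset.Icc 1 n, ((Finset.range b).image fun a : ℕ => (a : ℚ) / (b : ℚ)).card
      ≤ ∑ b ∈ Finset.Icc 1 n, b :=
    Finset.sum_le_sum fun b _ => le_trans Finset.card_image_le (by simp)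
  refine le_trans h1 ?_
  have h3 : (∑ i ∈ Finset.range (n + 1), i) * 2 = n * (n + 1) := by
    rw [Finset.sum_range_id_mul_two]; simp [Nat.mul_comm]
  have h4 := h2 n
  omega

lemma zero_mem_Cset {n : ℕ} (hn : 1 ≤ n) : (0 : ℚ) ∈ Cset n := by
  simp only [Cset, Finset.mem_biUnion, Finset.mem_Icc, Finset.mem_image, Finset.mem_range]
  exact ⟨1, ⟨le_refl 1, hn⟩, 0, by omega, by norm_num⟩

lemma bestQ_spec {n p r : ℕ} (hn : 1 ≤ n) (hp : 0 < p) (hr : 0 < r) :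
    bestQ n p r ∈ Cset n ∧ bestQ n p r < (r : ℚ) / p := by
  have hpos : (0 : ℚ) < (r : ℚ) / p := by
    have h1 : (0 : ℚ) < (r : ℚ) := by exact_mod_cast hr
    have h2 : (0 : ℚ) < (p : ℚ) := by exact_mod_cast hp
    positivity
  have hne : (((Cset n).filter fun q => q < (r : ℚ) / p)).Nonempty :=
    ⟨0, Finset.mem_filter.mpr ⟨zero_mem_Cset hn, hpos⟩⟩
  obtain ⟨a, ha⟩ := Finset.max_of_nonempty hne
  have hmem := Finset.mem_of_max ha
  rw [Finset.mem_filter] at hmem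
  rw [bestQ, ha]
  simpa using hmem

lemma le_bestQ {n p r : ℕ} {q : ℚ} (hq : q ∈ Cset n) (hlt : q < (r : ℚ) / p) :
    q ≤ bestQ n p r := by
  have hmem : q ∈ (Cset n).filter fun q => q < (r : ℚ) / p := Finset.mem_filter.mpr ⟨hq, hlt⟩
  have hne : (((Cset n).filter fun q => q < (r : ℚ) / p)).Nonempty := ⟨q, hmem⟩
  rw [bestQ, ← Finset.coe_max' hne]
  exact Finset.le_max' _ q hmem

lemma key_sum {n p : ℕ} (hp : p.Prime) (hnp : n < p) {m : ℕ} (hm : 0 < m) (hmn : m ≤ n)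
    {g : ℕ → ℕ} {q : ℚ} (hg : ∀ i < m, 0 < g i ∧ g i < p ∧ bestQ n p (g i) = q) :
    ¬ p ∣ ∑ i ∈ Finset.range m, g i := by
  rintro ⟨k, hk⟩
  have hn1 : 1 ≤ n := lt_of_lt_of_le hm hmn
  have hppos := hp.pos
  have hspos : 0 < ∑ i ∈ Finset.range m, g i :=
    Finset.sum_pos (fun i hi => (hg i (Finset.mem_range.mp hi)).1) ⟨0, Finset.mem_range.mpr hm⟩
  have hkpos : 0 < k := by
    rcases Nat.eq_zero_or_pos k with rfl | h
    · omega
    · exact h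
  have h1 : ∑ i ∈ Finset.range m, g i ≤ ∑ _i ∈ Finset.range m, (p - 1) :=
    Finset.sum_le_sum fun i hi => by have := (hg i (Finset.mem_range.mp hi)).2.1; omega
  rw [Finset.sum_const, Finset.card_range, smul_eq_mul] at h1
  have hkm : k < m := by
    have h2 : m * (p - 1) < m * p := (Nat.mul_lt_mul_left hm).mpr (by omega)
    exact Nat.lt_of_mul_lt_mul_left
      (show p * k < p * m by rw [← hk, Nat.mul_comm p m]; exact lt_of_le_of_lt h1 h2)
  have hpQ : (0 : ℚ) < p := by exact_mod_cast hppos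
  have hmQ : (0 : ℚ) < m := by exact_mod_cast hm
  have hqlt : q < (k : ℚ) / m := by
    have hpoint : ∀ i ∈ Finset.range m, q * p < (g i : ℚ) := by
      intro i hi
      obtain ⟨h1', h2', h3'⟩ := hg i (Finset.mem_range.mp hi)
      have hb := (bestQ_spec hn1 hppos h1').2
      rw [h3'] at hb
      exact (lt_div_iff₀ hpQ).mp hb
    have hsum := Finset.sum_lt_sum_of_nonempty ⟨0, Finset.mem_range.mpr hm⟩ hpoint
    rw [Finset.sum_const, Finset.card_range, nsmul_eq_mul] at hsum
    have hcast : (∑ i ∈ Finset.range m, ((g i : ℚ))) = ((p * k : ℕ) : ℚ) := by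
      rw [← hk]; push_cast; rfl
    rw [hcast] at hsum
    push_cast at hsum
    rw [lt_div_iff₀ hmQ]
    nlinarith [hsum, hpQ]
  have hkmem : (k : ℚ) / m ∈ Cset n := by
    simp only [Cset, Finset.mem_biUnion, Finset.mem_Icc, Finset.mem_image, Finset.mem_range]
    exact ⟨m, ⟨hm, hmn⟩, k, hkm, rfl⟩
  obtain ⟨j, hj, hjmax⟩ : ∃ j ∈ Finset.range m, ∀ i ∈ Finset.range m, g i ≤ g j :=
    Finset.exists_max_image (Finset.range m) g ⟨0, Finset.mem_range.mpr hm⟩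
  have hsmax : p * k ≤ m * g j := by
    rw [← hk]
    calc ∑ i ∈ Finset.range m, g i ≤ ∑ _i ∈ Finset.range m, g j :=
          Finset.sum_le_sum hjmax
      _ = m * g j := by rw [Finset.sum_const, Finset.card_range, smul_eq_mul]
  have hgj := hg j (Finset.mem_range.mp hj)
  rcases Nat.lt_or_ge (p * k) (m * g j) with hlt | hge
  · have hdivlt : (k : ℚ) / m < (g j : ℚ) / p := by
      rw [div_lt_div_iff₀ hmQ hpQ]
      have hc : (p : ℚ) * k < (m : ℚ) * (g j) := by exact_mod_cast hlt
      nlinarith [hc]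
    have hle := le_bestQ hkmem hdivlt
    rw [hgj.2.2] at hle
    exact absurd (lt_of_lt_of_le hqlt hle) (lt_irrefl q)
  · have heq : p * k = m * g j := le_antisymm hsmax hge
    have hdvd : p ∣ m * g j := heq ▸ Dvd.intro k rfl
    have hpm : ¬ p ∣ m := fun h => absurd (Nat.le_of_dvd hm h) (by omega)
    have hpgj : p ∣ g j := (hp.dvd_mul.mp hdvd).resolve_left hpm
    have := Nat.le_of_dvd hgj.1 hpgj
    have := hgj.2.1
    omega

/-- The graph `G'_p`. -/
def shiftGraph {V : Type*} (A : V → V → Prop) (d : V → V → ℕ) (p : ℕ) : SimpleGraph V where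
  Adj u v := u ≠ v ∧ ((Reach A u v ∧ ¬ p ∣ d u v) ∨ (Reach A v u ∧ ¬ p ∣ d v u))
  symm := by constructor; intro u v h; exact ⟨h.1.symm, h.2.symm⟩
  loopless := by constructor; intro v h; exact h.1 rfl

/-- Any induced subgraph of `G'_p` with clique number `n < p` has chromatic number at
most `n^(n(n+1)/2)`. -/
theorem stmt9 {V : Type*} [Fintype V] (A : V → V → Prop)
    (hacyc : ∀ x : V, ¬ Relation.TransGen A x x)
    (huniq : ∀ (u v : V) (l₁ l₂ : List V),
      DiPathFrom A l₁ u v → DiPathFrom A l₂ u v → l₁ = l₂)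
    (d : V → V → ℕ)
    (hd : ∀ (u v : V) (l : List V), DiPathFrom A l u v → l.length = d u v + 1)
    (p : ℕ) (hp : p.Prime) (S : Set V) (n : ℕ)
    (hclique : ((shiftGraph A d p).induce S).cliqueNum = n) (hnp : n < p) :
    ((shiftGraph A d p).induce S).chromaticNumber ≤ (n ^ (n * (n + 1) / 2) : ℕ) := by
  classical
  have hd0 : ∀ u : V, d u u = 0 := d_self d hd
  have hcl : ∀ s : Finset ↥S, ((shiftGraph A d p).induce S).IsClique ↑s → s.card ≤ n := by
    intro s hs
    rw [← hclique]
    exact SimpleGraph.IsClique.card_le_cliqueNum (tc := hs)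
  rcases Nat.eq_zero_or_pos n with rfl | hn
  · -- n = 0 : no edges
    have hnoedge : ∀ a b : ↥S, ¬ ((shiftGraph A d p).induce S).Adj a b := by
      intro a b hab
      have hne : a ≠ b := hab.ne
      have hclq : ((shiftGraph A d p).induce S).IsClique ↑({a, b} : Finset ↥S) := by
        intro x hx y hy hxy
        simp only [Finset.coe_insert, Finset.coe_singleton, Set.mem_insert_iff,
          Set.mem_singleton_iff] at hx hy
        rcases hx with rfl | rfl <;> rcases hy with rfl | rfl
        · exact absurd rfl hxy
        · exact hab
        · exact hab.symm
        · exact absurd rfl hxy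
      have hcard := hcl _ hclq
      rw [Finset.card_insert_of_notMem (by simpa using hne), Finset.card_singleton] at hcard
      omega
    have hcol : ((shiftGraph A d p).induce S).Colorable 1 :=
      ⟨⟨fun _ => 0, fun {a b} hab => absurd hab (hnoedge a b)⟩⟩
    refine le_trans hcol.chromaticNumber_le ?_
    norm_num
  · -- main case
    set N := Fintype.card V with hN
    set stp : ℚ → V → V → Prop := fun q u v =>
      u ∈ S ∧ v ∈ S ∧ Reach A u v ∧ u ≠ v ∧ ¬ p ∣ d u v ∧ bestQ n p (d u v % p) = q with hstp
    set P : ℚ → V → ℕ → Prop :=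
      fun q v k => ∃ f : ℕ → V, (∀ i < k, stp q (f i) (f (i+1))) ∧ f k = v with hP
    have hP0 : ∀ q v, P q v 0 := fun q v => ⟨fun _ => v, fun i hi => absurd hi (by omega), rfl⟩
    set ht : ℚ → V → ℕ := fun q v => Nat.findGreatest (P q v) N with hht
    have hPle : ∀ q (v : V), P q v (ht q v) :=
      fun q v => Nat.findGreatest_spec (Nat.zero_le N) (hP0 q v)
    have stp_trans : ∀ q u v, stp q u v → Relation.TransGen A u v := by
      intro q u v h
      rcases reach_transGen h.2.2.1 with rfl | t
      · exact absurd rfl h.2.2.2.1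
      · exact t
    have chain_reach : ∀ (q : ℚ) (f : ℕ → V) (k : ℕ), (∀ i < k, stp q (f i) (f (i+1))) →
        ∀ i j, i ≤ j → j ≤ k → Reach A (f i) (f j) ∧
          d (f i) (f j) = ∑ t ∈ Finset.range (j - i), d (f (i + t)) (f (i + t + 1)) := by
      intro q f k hf i j hij hjk
      induction j, hij using Nat.le_induction with
      | base => exact ⟨reach_refl (f i), by simp [hd0]⟩
      | succ j hij ih =>
        obtain ⟨hr, hdsum⟩ := ih (by omega)
        have hstep := hf j (by omega)
        obtain ⟨hrw, hdw⟩ := reach_trans_add hacyc d hd hr hstep.2.2.1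
        refine ⟨hrw, ?_⟩
        rw [hdw, show j + 1 - i = (j - i) + 1 from by omega, Finset.sum_range_succ, ← hdsum,
          show i + (j - i) = j from by omega]
    have chain_tg : ∀ (q : ℚ) (f : ℕ → V) (k : ℕ), (∀ i < k, stp q (f i) (f (i+1))) →
        ∀ i j, i < j → j ≤ k → Relation.TransGen A (f i) (f j) := by
      intro q f k hf i j
      induction j with
      | zero => omega
      | succ j ih =>
        intro hij hjk
        rcases Nat.lt_or_ge i j with h | h
        · exact (ih h (by omega)).trans (stp_trans _ _ _ (hf j (by omega)))
        · obtain rfl : i = j := by omega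
          exact stp_trans _ _ _ (hf i (by omega))
    have chain_ne : ∀ (q : ℚ) (f : ℕ → V) (k : ℕ), (∀ i < k, stp q (f i) (f (i+1))) →
        ∀ i j, i < j → j ≤ k → f i ≠ f j := by
      intro q f k hf i j hij hjk heq
      have := chain_tg q f k hf i j hij hjk
      rw [← heq] at this
      exact hacyc (f i) this
    have chain_dvd : ∀ (q : ℚ) (f : ℕ → V) (k : ℕ), (∀ i < k, stp q (f i) (f (i+1))) →
        ∀ i j, i < j → j ≤ k → j - i ≤ n → ¬ p ∣ d (f i) (f j) := by
      intro q f k hf i j hij hjk hjin hdvd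
      obtain ⟨hr, hsum⟩ := chain_reach q f k hf i j (le_of_lt hij) hjk
      have hkey := key_sum hp hnp (m := j - i) (by omega) hjin
        (g := fun t => d (f (i + t)) (f (i + t + 1)) % p) (q := q) ?_
      · apply hkey
        have hmod := Finset.sum_nat_mod (Finset.range (j - i)) p
          (fun t => d (f (i + t)) (f (i + t + 1)))
        rw [hsum] at hdvd
        rw [Nat.dvd_iff_mod_eq_zero] at hdvd ⊢
        rw [← hmod]
        exact hdvd
      · intro t htlt
        have hstep := hf (i + t) (by omega)
        have hnd : ¬ p ∣ d (f (i + t)) (f (i + t + 1)) := hstep.2.2.2.2.1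
        have hmodpos : 0 < d (f (i + t)) (f (i + t + 1)) % p :=
          Nat.pos_of_ne_zero fun h => hnd (Nat.dvd_of_mod_eq_zero h)
        exact ⟨hmodpos, Nat.mod_lt _ hp.pos, hstep.2.2.2.2.2⟩
    have ht_lt : ∀ q (v : V), v ∈ S → ht q v < n := by
      intro q v hv
      by_contra hge
      push_neg at hge
      obtain ⟨f, hf, hfv⟩ := hPle q v
      have hmemS : ∀ i ≤ n, f i ∈ S := by
        intro i hi
        rcases Nat.lt_or_ge i (ht q v) with h | h
        · exact (hf i h).1
        · obtain rfl : i = ht q v := by omega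
          rw [hfv]; exact hv
      set emb : ℕ → ↥S := fun i => if h : i ≤ n then ⟨f i, hmemS i h⟩ else ⟨v, hv⟩ with hemb
      have hembval : ∀ i ≤ n, (emb i : V) = f i := by
        intro i hi; simp [hemb, hi]
      set s : Finset ↥S := (Finset.range (n+1)).image emb with hs
      have hclq : ((shiftGraph A d p).induce S).IsClique ↑s := by
        intro x hx y hy hxy
        rw [hs] at hx hy
        simp only [Finset.coe_image, Finset.coe_range, Set.mem_image, Set.mem_Iio] at hx hy
        obtain ⟨i, hi, rfl⟩ := hx
        obtain ⟨j, hj, rfl⟩ := hy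
        have hne : (emb i : V) ≠ (emb j : V) := fun h => hxy (Subtype.ext h)
        rw [hembval i (by omega), hembval j (by omega)] at hne
        have hadj : (shiftGraph A d p).Adj (f i) (f j) := by
          rcases Nat.lt_or_ge i j with h | h
          · exact ⟨hne, Or.inl ⟨(chain_reach q f _ hf i j (by omega) (by omega)).1,
              chain_dvd q f _ hf i j h (by omega) (by omega)⟩⟩
          · have h' : j < i := by
              rcases Nat.lt_or_ge j i with h' | h'
              · exact h'
              · exact absurd (Nat.le_antisymm h h') (fun he => hne (by rw [he]))
            exact ⟨hne, Or.inr ⟨(chain_reach q f _ hf j i (by omega) (by omega)).1,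
              chain_dvd q f _ hf j i h' (by omega) (by omega)⟩⟩
        show ((shiftGraph A d p).induce S).Adj (emb i) (emb j)
        rw [SimpleGraph.comap_adj, Function.Embedding.coe_subtype,
          hembval i (by omega), hembval j (by omega)]
        exact hadj
      have hcard : s.card = n + 1 := by
        rw [hs, Finset.card_image_of_injOn, Finset.card_range]
        intro i hi j hj hij
        simp only [Finset.coe_range, Set.mem_Iio] at hi hj
        by_contra hne
        have hvaleq : f i = f j := by
          rw [← hembval i (by omega), ← hembval j (by omega), hij]
        rcases Nat.lt_or_ge i j with h | h
        · exact chain_ne q f _ hf i j h (by omega) hvaleq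
        · exact chain_ne q f _ hf j i (by omega) (by omega) hvaleq.symm
      have := hcl s hclq
      omega
    have ht_step : ∀ q (u v : V), stp q u v → ht q u < ht q v := by
      intro q u v hstep
      obtain ⟨f, hf, hfu⟩ := hPle q u
      set k := ht q u with hk
      set f' : ℕ → V := fun i => if i ≤ k then f i else v with hf'
      have hf'step : ∀ i < k + 1, stp q (f' i) (f' (i+1)) := by
        intro i hi
        rcases Nat.lt_or_ge i k with h | h
        · have := hf i h
          simpa [hf', show i ≤ k from by omega, show i + 1 ≤ k from by omega] using this
        · obtain rfl : i = k := by omega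
          simp only [hf', if_pos (le_refl k), if_neg (show ¬ k + 1 ≤ k from by omega)]
          rw [hfu]; exact hstep
      have hP' : P q v (k + 1) :=
        ⟨f', hf'step, by simp [hf', show ¬ k + 1 ≤ k from by omega]⟩
      have hinj : Set.InjOn f' ↑(Finset.range (k + 2)) := by
        intro i hi j hj hij
        simp only [Finset.coe_range, Set.mem_Iio] at hi hj
        by_contra hne
        rcases Nat.lt_or_ge i j with h | h
        · exact chain_ne q f' (k+1) hf'step i j h (by omega) hij
        · exact chain_ne q f' (k+1) hf'step j i (by omega) (by omega) hij.symm
      have hcardle : k + 2 ≤ N := by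
        have h1 : ((Finset.range (k + 2)).image f').card = k + 2 := by
          rw [Finset.card_image_of_injOn hinj, Finset.card_range]
        calc k + 2 = ((Finset.range (k + 2)).image f').card := h1.symm
          _ ≤ (Finset.univ : Finset V).card := Finset.card_le_univ _
          _ = N := rfl
      exact lt_of_lt_of_le (Nat.lt_succ_self k) (Nat.le_findGreatest (by omega) hP')
    -- the coloring
    have hcol : ((shiftGraph A d p).induce S).Coloring (↥(Cset n) → Fin n) := by
      refine SimpleGraph.Coloring.mk
        (fun v q => ⟨ht q.1 ↑v, ht_lt q.1 ↑v v.2⟩) ?_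
      intro a b hab heq
      rw [SimpleGraph.comap_adj, Function.Embedding.coe_subtype] at hab
      obtain ⟨hne, hcase⟩ := hab
      rcases hcase with ⟨hr, hnd⟩ | ⟨hr, hnd⟩
      · have hrpos : 0 < d (↑a) (↑b) % p :=
          Nat.pos_of_ne_zero fun h => hnd (Nat.dvd_of_mod_eq_zero h)
        have hq0 : bestQ n p (d (↑a) (↑b) % p) ∈ Cset n := (bestQ_spec hn hp.pos hrpos).1
        have hstep : stp (bestQ n p (d (↑a) (↑b) % p)) ↑a ↑b :=
          ⟨a.2, b.2, hr, hne, hnd, rfl⟩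
        have hlt := ht_step _ _ _ hstep
        have := congrFun heq ⟨_, hq0⟩
        rw [Fin.mk.injEq] at this
        have h2 : ht (bestQ n p (d (↑a) (↑b) % p)) ↑a
            = ht (bestQ n p (d (↑a) (↑b) % p)) ↑b := this
        omega
      · have hrpos : 0 < d (↑b) (↑a) % p :=
          Nat.pos_of_ne_zero fun h => hnd (Nat.dvd_of_mod_eq_zero h)
        have hq0 : bestQ n p (d (↑b) (↑a) % p) ∈ Cset n := (bestQ_spec hn hp.pos hrpos).1
        have hstep : stp (bestQ n p (d (↑b) (↑a) % p)) ↑b ↑a :=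
          ⟨b.2, a.2, hr, hne.symm, hnd, rfl⟩
        have hlt := ht_step _ _ _ hstep
        have := congrFun heq ⟨_, hq0⟩
        rw [Fin.mk.injEq] at this
        have h2 : ht (bestQ n p (d (↑b) (↑a) % p)) ↑a
            = ht (bestQ n p (d (↑b) (↑a) % p)) ↑b := this
        omega
    have hcolorable := hcol.colorable
    have hcardeq : Fintype.card (↥(Cset n) → Fin n) = n ^ (Cset n).card := by
      rw [Fintype.card_fun, Fintype.card_fin, Fintype.card_coe]
    rw [hcardeq] at hcolorable
    have hfinal := hcolorable.mono (Nat.pow_le_pow_right hn (Cset_card n))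
    exact hfinal.chromaticNumber_le
end

section
/- Suppose that for every prime p there exists a finite graph G'_p with clique number at most p and chromatic number at least g(p), where g(p) = max{ f(n) : p ≤ n < nextPrime(p) } for a given function f : ℕ → ℕ, and suppose moreover that every induced subgraph of G'_p with clique number n < p has chromatic number at most n^(n²). Then the hereditary class C consisting of all induced subgraphs of the graphs G'_p is χ-bounded, and for every integer n ≥ 2 contains a graph G with ω(G) ≤ n and χ(G) ≥ f(n). -/
/-- A class of finite graphs is hereditary if it is closed under induced subgraphs. -/
def Hereditary (C : Set (Σ n : ℕ, SimpleGraph (Fin n))) : Prop :=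
  ∀ G ∈ C, ∀ (m : ℕ) (e : Fin m ↪ Fin G.1), (⟨m, G.2.comap e⟩ : Σ n, SimpleGraph (Fin n)) ∈ C

/-- A class of finite graphs is χ-bounded if some function bounds the chromatic number in
terms of the clique number. -/
def ChiBounded (C : Set (Σ n : ℕ, SimpleGraph (Fin n))) : Prop :=
  ∃ F : ℕ → ℕ, ∀ G ∈ C, G.2.chromaticNumber ≤ (F G.2.cliqueNum : ℕ∞)

/-- The smallest prime strictly greater than `p`. -/
noncomputable def nextPrime (p : ℕ) : ℕ := Nat.find (Nat.exists_infinite_primes (p + 1))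

/-- `g p = max { f n : p ≤ n < nextPrime p }`. -/
noncomputable def gfun (f : ℕ → ℕ) (p : ℕ) : ℕ := (Finset.Ico p (nextPrime p)).sup f

/-- If for every prime `p` there is a graph `G'_p` with clique number at most `p`,
chromatic number at least `g(p)`, and all of whose induced subgraphs with clique number
`n < p` have chromatic number at most `n^(n²)`, then the class of all induced subgraphs of
the `G'_p` is χ-bounded and contains, for every `n ≥ 2`, a graph with clique number at
most `n` and chromatic number at least `f(n)`. -/
theorem stmt12 (f : ℕ → ℕ) (Gp : ℕ → Σ n : ℕ, SimpleGraph (Fin n))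
    (hω : ∀ p : ℕ, p.Prime → (Gp p).2.cliqueNum ≤ p)
    (hχ : ∀ p : ℕ, p.Prime → (gfun f p : ℕ∞) ≤ (Gp p).2.chromaticNumber)
    (hind : ∀ p : ℕ, p.Prime → ∀ (m : ℕ) (e : Fin m ↪ Fin (Gp p).1) (n : ℕ),
      ((Gp p).2.comap e).cliqueNum = n → n < p →
      ((Gp p).2.comap e).chromaticNumber ≤ (n ^ (n ^ 2) : ℕ)) :
    ChiBounded {G : Σ n : ℕ, SimpleGraph (Fin n) |
        ∃ p : ℕ, p.Prime ∧ ∃ e : Fin G.1 ↪ Fin (Gp p).1, G.2 = (Gp p).2.comap e} ∧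
    ∀ n : ℕ, 2 ≤ n →
      ∃ G ∈ {G : Σ n : ℕ, SimpleGraph (Fin n) |
          ∃ p : ℕ, p.Prime ∧ ∃ e : Fin G.1 ↪ Fin (Gp p).1, G.2 = (Gp p).2.comap e},
        G.2.cliqueNum ≤ n ∧ (f n : ℕ∞) ≤ G.2.chromaticNumber := by
  constructor
  · refine ⟨fun k => max (k ^ (k ^ 2))
      (((Finset.range (k + 1)).filter Nat.Prime).sup
        (fun q => ((Gp q).2.chromaticNumber).toNat)), ?_⟩
    rintro G ⟨p, hp, e, hG⟩
    set k := G.2.cliqueNum with hk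
    rcases lt_or_ge k p with hlt | hle
    · have h := hind p hp G.1 e k (by rw [← hG]) hlt
      calc G.2.chromaticNumber = ((Gp p).2.comap e).chromaticNumber := by rw [hG]
        _ ≤ ((k ^ (k ^ 2) : ℕ) : ℕ∞) := h
        _ ≤ _ := Nat.cast_le.mpr (le_max_left _ _)
    · have h1 : G.2.chromaticNumber ≤ (Gp p).2.chromaticNumber := by
        rw [hG]
        exact SimpleGraph.chromaticNumber_mono_of_hom
          (SimpleGraph.Embedding.comap e (Gp p).2).toHom
      have hfin : (Gp p).2.chromaticNumber ≠ ⊤ :=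
        ((Gp p).2.colorable_of_fintype.chromaticNumber_le.trans_lt (WithTop.coe_lt_top _)).ne
      have hmem : p ∈ (Finset.range (k + 1)).filter Nat.Prime := by
        simp [Finset.mem_filter, Nat.lt_succ_iff, hle, hp]
      have h2 : ((Gp p).2.chromaticNumber).toNat ≤
          ((Finset.range (k + 1)).filter Nat.Prime).sup
            (fun q => ((Gp q).2.chromaticNumber).toNat) :=
        Finset.le_sup (f := fun q => ((Gp q).2.chromaticNumber).toNat) hmem
      calc G.2.chromaticNumber ≤ (Gp p).2.chromaticNumber := h1
        _ = (((Gp p).2.chromaticNumber).toNat : ℕ∞) := (ENat.coe_toNat hfin).symm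
        _ ≤ _ := Nat.cast_le.mpr (le_trans h2 (le_max_right _ _))
  · intro n hn
    have h2 : 2 ∈ (Finset.range (n + 1)).filter Nat.Prime := by
      simp [Nat.lt_succ_iff, hn, Nat.prime_two]
    set S := (Finset.range (n + 1)).filter Nat.Prime with hS
    have hSne : S.Nonempty := ⟨2, h2⟩
    set p := S.max' hSne with hpdef
    have hpmem := S.max'_mem hSne
    have hp : p.Prime := (Finset.mem_filter.mp hpmem).2
    have hpn : p ≤ n := Nat.lt_succ_iff.mp (Finset.mem_range.mp (Finset.mem_filter.mp hpmem).1)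
    have hnp : n < nextPrime p := by
      by_contra h
      push_neg at h
      have hq := Nat.find_spec (Nat.exists_infinite_primes (p + 1))
      have : nextPrime p ∈ S := by
        simp only [hS, Finset.mem_filter, Finset.mem_range, Nat.lt_succ_iff]
        exact ⟨h, hq.2⟩
      have h3 := Finset.le_max' S _ this
      have h4 : p + 1 ≤ nextPrime p := hq.1
      omega
    have hfn : f n ≤ gfun f p := Finset.le_sup (Finset.mem_Ico.mpr ⟨hpn, hnp⟩)
    refine ⟨Gp p, ⟨p, hp, Function.Embedding.refl _, ?_⟩, le_trans (hω p hp) hpn, ?_⟩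
    · exact SimpleGraph.comap_id.symm
    · exact le_trans (Nat.cast_le.mpr hfn) (hχ p hp)
end

section
/- For every k ≥ 1 there exists a finite triangle-free graph G_k with chromatic number k admitting an acyclic orientation of its edges such that for every ordered pair of vertices (u,v) there is at most one directed path from u to v. -/
open SimpleGraph

structure GoodPack (k : ℕ) (V : Type) [Fintype V] (G : SimpleGraph V) (A : V → V → Prop) :
    Prop where
  cf : G.CliqueFree 3
  col : G.Colorable k
  lb : ∀ n, G.Colorable n → k ≤ n
  adj : ∀ u v, G.Adj u v ↔ (A u v ∨ A v u)
  asym : ∀ u v, ¬ (A u v ∧ A v u)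
  acyc : ∀ v, ¬ Relation.TransGen A v v
  uniq : ∀ u v l₁ l₂, DiPathFrom A l₁ u v → DiPathFrom A l₂ u v → l₁ = l₂

/-! ### Base case -/

lemma false_chain {V : Type} {l : List V} (h : l.Chain' (fun _ _ => False))
    {u : V} (hh : l.head? = some u) : l = [u] := by
  match l, h with
  | [x], _ => simp_all
  | x :: y :: t, h => exact absurd (List.isChain_cons_cons.mp h).1 id

lemma base_pack : GoodPack 1 (Fin 1) ⊥ (fun _ _ => False) := by
  constructor
  · exact SimpleGraph.cliqueFree_bot (by norm_num)
  · exact ⟨SimpleGraph.Coloring.mk (fun _ => 0) (by simp)⟩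
  · intro n hn
    rcases Nat.eq_zero_or_pos n with h | h
    · subst h; obtain ⟨c⟩ := hn; exact (c 0).elim0
    · exact h
  · simp
  · simp
  · intro v h
    cases h with
    | single h => exact h
    | tail _ h => exact h
  · rintro u v l₁ l₂ ⟨c₁, -, hh₁, -⟩ ⟨c₂, -, hh₂, -⟩
    rw [false_chain c₁ hh₁, false_chain c₂ hh₂]

/-! ### Transport along an equivalence -/

lemma transport {k : ℕ} {V : Type} [Fintype V] {G : SimpleGraph V} {A : V → V → Prop}
    (p : GoodPack k V G A) {N : ℕ} (e : V ≃ Fin N) :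
    ∃ (G' : SimpleGraph (Fin N)) (A' : Fin N → Fin N → Prop), GoodPack k (Fin N) G' A' := by
  refine ⟨⟨fun x y => G.Adj (e.symm x) (e.symm y), ⟨fun x y h => h.symm⟩, ⟨fun x h => G.irrefl h⟩⟩,
    fun x y => A (e.symm x) (e.symm y), ?_, ?_, ?_, ?_, ?_, ?_, ?_⟩
  · -- clique free
    haveI := Classical.decEq V
    intro s hs
    rw [SimpleGraph.is3Clique_iff] at hs
    obtain ⟨a, b, c, h1, h2, h3, -⟩ := hs
    exact p.cf {e.symm a, e.symm b, e.symm c}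
      (SimpleGraph.is3Clique_iff.mpr ⟨_, _, _, h1, h2, h3, rfl⟩)
  · obtain ⟨c⟩ := p.col
    exact ⟨SimpleGraph.Coloring.mk (fun x => c (e.symm x)) (fun h => c.valid h)⟩
  · intro n ⟨c⟩
    refine p.lb n ⟨SimpleGraph.Coloring.mk (fun v => c (e v)) (fun {u v} h => c.valid ?_)⟩
    simpa using h
  · intro u v; exact p.adj _ _
  · intro u v; exact p.asym _ _
  · intro v hv
    exact p.acyc (e.symm v) (Relation.TransGen.lift e.symm (fun a b h => h) _ _ hv)
  · rintro u v l₁ l₂ ⟨c₁, n₁, hh₁, hl₁⟩ ⟨c₂, n₂, hh₂, hl₂⟩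
    have key : ∀ l : List (Fin N), l.Chain' (fun x y => A (e.symm x) (e.symm y)) → l.Nodup →
        l.head? = some u → l.getLast? = some v →
        DiPathFrom A (l.map e.symm) (e.symm u) (e.symm v) := by
      intro l hc hn hh hl
      refine ⟨?_, hn.map e.symm.injective, ?_, ?_⟩
      · exact (List.isChain_map e.symm).mpr hc
      · rw [List.head?_map, hh]; rfl
      · rw [List.getLast?_map, hl]; rfl
    have := p.uniq _ _ _ _ (key l₁ c₁ n₁ hh₁ hl₁) (key l₂ c₂ n₂ hh₂ hl₂)
    exact List.map_injective_iff.mpr e.symm.injective this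

/-! ### The Zykov step -/

section Step

set_option linter.unusedSectionVars false
variable {k : ℕ} {V : Type} [Fintype V] {G : SimpleGraph V} {A : V → V → Prop}

/-- Vertices: `k` copies of `V` plus one new vertex for each transversal. -/
abbrev ZV (k : ℕ) (V : Type) : Type := (Fin k × V) ⊕ ((Fin k) → V)

def zadj (G : SimpleGraph V) : ZV k V → ZV k V → Prop
  | .inl (i, u), .inl (j, v) => i = j ∧ G.Adj u v
  | .inl (i, u), .inr f => f i = u
  | .inr f, .inl (i, u) => f i = u
  | .inr _, .inr _ => False

def ZG (G : SimpleGraph V) : SimpleGraph (ZV k V) where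
  Adj := zadj G
  symm := ⟨by
    rintro (⟨i, u⟩ | f) (⟨j, v⟩ | g) h <;> simp only [zadj] at h ⊢
    · exact ⟨h.1.symm, h.2.symm⟩
    · exact h
    · exact h⟩
  loopless := ⟨by
    rintro (⟨i, u⟩ | f) h <;> simp only [zadj] at h
    exact G.irrefl h.2⟩

def ZA (A : V → V → Prop) : ZV k V → ZV k V → Prop
  | .inl (i, u), .inl (j, v) => i = j ∧ A u v
  | .inl (i, u), .inr f => f i = u
  | _, _ => False

@[simp] lemma ZA_inr {f : Fin k → V} {y : ZV k V} : ¬ ZA A (.inr f) y := by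
  cases y <;> simp [ZA]

lemma zadj_iff (hadj : ∀ u v, G.Adj u v ↔ (A u v ∨ A v u)) :
    ∀ x y : ZV k V, (ZG G).Adj x y ↔ (ZA A x y ∨ ZA A y x) := by
  rintro (⟨i, u⟩ | f) (⟨j, v⟩ | g) <;>
    simp only [ZG, zadj, ZA, ZA_inr, or_false, false_or, or_self, iff_self]
  · constructor
    · rintro ⟨rfl, h⟩
      rcases (hadj u v).mp h with h | h
      · exact Or.inl ⟨rfl, h⟩
      · exact Or.inr ⟨rfl, h⟩
    · rintro (⟨rfl, h⟩ | ⟨rfl, h⟩)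
      · exact ⟨rfl, (hadj u v).mpr (Or.inl h)⟩
      · exact ⟨rfl, (hadj u v).mpr (Or.inr h)⟩
  all_goals try rfl


lemma ZG_cf (hcf : G.CliqueFree 3) : (ZG (k := k) G).CliqueFree 3 := by
  classical
  intro s hs
  rw [SimpleGraph.is3Clique_iff] at hs
  obtain ⟨a, b, c, h1, h2, h3, -⟩ := hs
  rcases a with ⟨i, u⟩ | f <;> rcases b with ⟨j, v⟩ | g <;> rcases c with ⟨m, w⟩ | h <;>
      simp only [ZG, zadj] at h1 h2 h3
  · obtain ⟨rfl, h1⟩ := h1; obtain ⟨rfl, h2⟩ := h2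
    exact hcf {u, v, w} (SimpleGraph.is3Clique_iff.mpr ⟨u, v, w, h1, h2, h3.2, rfl⟩)
  · obtain ⟨rfl, h1⟩ := h1; rw [← h2, ← h3] at h1; exact G.irrefl h1
  · obtain ⟨rfl, h2⟩ := h2; rw [← h1, ← h3] at h2; exact G.irrefl h2
  · obtain ⟨rfl, h3⟩ := h3; rw [← h1, ← h2] at h3; exact G.irrefl h3

lemma ZG_col (hcol : G.Colorable k) : (ZG (k := k) G).Colorable (k + 1) := by
  obtain ⟨c⟩ := hcol
  refine ⟨SimpleGraph.Coloring.mk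
    (fun x => match x with
      | .inl (_, u) => (c u).castSucc
      | .inr _ => Fin.last k) ?_⟩
  rintro (⟨i, u⟩ | f) (⟨j, v⟩ | g) h <;> simp only [ZG, zadj] at h ⊢
  · exact fun hc => c.valid h.2 (Fin.castSucc_injective k hc)
  · exact (Fin.castSucc_lt_last (c u)).ne
  · exact (Fin.castSucc_lt_last (c v)).ne'

lemma ZG_lb (hk : 1 ≤ k) (hlb : ∀ n, G.Colorable n → k ≤ n) :
    ∀ n, (ZG (k := k) G).Colorable n → k + 1 ≤ n := by
  classical
  intro n hn
  by_contra hlt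
  obtain ⟨c⟩ := hn
  have hkn : k ≤ n := by
    refine hlb n ⟨SimpleGraph.Coloring.mk (fun u => c (.inl (⟨0, hk⟩, u))) ?_⟩
    intro u v h hc
    exact c.valid (show (ZG G).Adj (.inl (⟨0, hk⟩, u)) (.inl (⟨0, hk⟩, v)) from ⟨rfl, h⟩) hc
  have hnk : k = n := by omega
  subst hnk
  have claim : ∀ i : Fin k, ∃ u : V, c (.inl (i, u)) = i := by
    by_contra hcl
    push_neg at hcl
    obtain ⟨i, hi⟩ := hcl
    have C : G.Coloring {x : Fin k // x ≠ i} := by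
      refine SimpleGraph.Coloring.mk (fun u => ⟨c (.inl (i, u)), hi u⟩) ?_
      intro u v h hc
      exact c.valid (show (ZG G).Adj (.inl (i, u)) (.inl (i, v)) from ⟨rfl, h⟩)
        (congrArg Subtype.val hc)
    have : G.Colorable (Fintype.card {x : Fin k // x ≠ i}) := C.colorable
    have hcard : Fintype.card {x : Fin k // x ≠ i} = k - 1 := by
      simp [Fintype.card_subtype_compl, Fintype.card_subtype_eq]
    rw [hcard] at this
    have := hlb _ this
    omega
  choose f hf using claim
  set i0 := c (.inr f) with hi0
  have hadj : (ZG (k := k) G).Adj (.inr f) (.inl (i0, f i0)) := rfl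
  exact c.valid hadj (by rw [hf i0, hi0])


lemma ZA_trans_src {x y : ZV k V} (h : Relation.TransGen (ZA A) x y) :
    ∃ i a, x = .inl (i, a) := by
  induction h with
  | single h =>
    rcases x with ⟨i, a⟩ | f
    · exact ⟨i, a, rfl⟩
    · exact absurd h ZA_inr
  | tail _ _ ih => exact ih

lemma ZA_trans_inl {x y : ZV k V} (h : Relation.TransGen (ZA A) x y) :
    ∀ j b, y = .inl (j, b) → ∃ a, x = .inl (j, a) ∧ Relation.TransGen A a b := by
  induction h with
  | single h =>
    rintro j b rfl
    rcases x with ⟨i, a⟩ | f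
    · obtain ⟨rfl, h⟩ := h
      exact ⟨a, rfl, Relation.TransGen.single h⟩
    · exact absurd h ZA_inr
  | @tail z w h1 h2 ih =>
    rintro j b rfl
    rcases z with ⟨i, c⟩ | f
    · obtain ⟨rfl, h2⟩ := h2
      obtain ⟨a, rfl, htg⟩ := ih i c rfl
      exact ⟨a, rfl, htg.tail h2⟩
    · exact absurd h2 ZA_inr

lemma ZA_acyc (hacyc : ∀ v, ¬ Relation.TransGen A v v) :
    ∀ v : ZV k V, ¬ Relation.TransGen (ZA A) v v := by
  intro v hv
  rcases v with ⟨i, a⟩ | f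
  · obtain ⟨a', ha', htg⟩ := ZA_trans_inl hv i a rfl
    obtain rfl : a = a' := by simpa using ha'
    exact hacyc _ htg
  · obtain ⟨i, a, h⟩ := ZA_trans_src hv
    simp at h

/-- Decomposition of a directed walk starting in copy `i`. -/
lemma ZA_decomp :
    ∀ (m : List (ZV k V)) (i : Fin k) (a : V),
      m.Chain' (ZA A) → m.head? = some (.inl (i, a)) →
      ∃ t : List V, t.Chain' A ∧ t.head? = some a ∧
        (m = t.map (fun x => .inl (i, x)) ∨
         ∃ f : Fin k → V, t.getLast? = some (f i) ∧
           m = t.map (fun x => .inl (i, x)) ++ [.inr f]) := by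
  intro m
  induction m with
  | nil => intro i a _ h; simp at h
  | cons x rest ih =>
    intro i a hc hh
    obtain rfl : x = .inl (i, a) := by simpa using hh
    rcases rest with _ | ⟨y, rest'⟩
    · exact ⟨[a], List.isChain_singleton a, rfl, Or.inl rfl⟩
    · have h1 : ZA A (.inl (i, a)) y := (List.isChain_cons_cons.mp hc).1
      have hc' : (y :: rest').Chain' (ZA A) := (List.isChain_cons_cons.mp hc).2
      rcases y with ⟨j, b⟩ | f
      · obtain ⟨rfl, hab⟩ : i = j ∧ A a b := h1
        obtain ⟨t', hct', hht', hd⟩ := ih i b hc' rfl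
        have hchain : (a :: t').Chain' A := by
          refine List.isChain_cons.mpr ?_
          exact ⟨fun c hc => by rw [hht'] at hc; exact (Option.some_inj.mp hc) ▸ hab, hct'⟩
        have ht'ne : t' ≠ [] := by
          intro h; rw [h] at hht'; simp at hht'
        refine ⟨a :: t', hchain, rfl, ?_⟩
        rcases hd with heq | ⟨f, hlf, heq⟩
        · exact Or.inl (by rw [List.map_cons, ← heq])
        · refine Or.inr ⟨f, ?_, by rw [List.map_cons, List.cons_append, ← heq]⟩
          rcases t' with _ | ⟨b', t''⟩
          · exact absurd rfl ht'ne
          · rw [List.getLast?_cons_cons]; exact hlf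
      · have hfa : f i = a := h1
        have hrest' : rest' = [] := by
          rcases rest' with _ | ⟨z, rest''⟩
          · rfl
          · exact absurd (List.isChain_cons_cons.mp hc').1 ZA_inr
        subst hrest'
        exact ⟨[a], List.isChain_singleton a, rfl, Or.inr ⟨f, by simp [hfa], by simp⟩⟩

lemma inr_head {l : List (ZV k V)} {f : Fin k → V} (hc : l.Chain' (ZA A))
    (hh : l.head? = some (.inr f)) : l = [.inr f] := by
  rcases l with _ | ⟨x, rest⟩
  · simp at hh
  · obtain rfl : x = .inr f := by simpa using hh
    rcases rest with _ | ⟨y, rest'⟩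
    · rfl
    · exact absurd (List.isChain_cons_cons.mp hc).1 ZA_inr

lemma ZA_uniq
    (huniq : ∀ u v l₁ l₂, DiPathFrom A l₁ u v → DiPathFrom A l₂ u v → l₁ = l₂) :
    ∀ (u v : ZV k V) (l₁ l₂ : List (ZV k V)),
      DiPathFrom (ZA A) l₁ u v → DiPathFrom (ZA A) l₂ u v → l₁ = l₂ := by
  rintro u v l₁ l₂ ⟨c₁, n₁, hh₁, hl₁⟩ ⟨c₂, n₂, hh₂, hl₂⟩
  rcases u with ⟨i, a⟩ | g
  · -- start in a copy
    obtain ⟨t₁, hct₁, hht₁, hd₁⟩ := ZA_decomp l₁ i a c₁ hh₁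
    obtain ⟨t₂, hct₂, hht₂, hd₂⟩ := ZA_decomp l₂ i a c₂ hh₂
    rcases v with ⟨j, b⟩ | f
    · -- ends in a copy: both decompositions must be the `map` form
      have key : ∀ (t : List V) (l : List (ZV k V)), l.Nodup → l.getLast? = some (.inl (j, b)) →
          t.Chain' A → t.head? = some a →
          (l = t.map (fun x => .inl (i, x)) ∨
            ∃ f : Fin k → V, t.getLast? = some (f i) ∧
              l = t.map (fun x => .inl (i, x)) ++ [.inr f]) →
          i = j ∧ DiPathFrom A t a b ∧ l = t.map (fun x => .inl (i, x)) := by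
        rintro t l hn hl hct hht (rfl | ⟨f, hlf, rfl⟩)
        · rw [List.getLast?_map] at hl
          obtain ⟨c, hc, hcb⟩ : ∃ c, t.getLast? = some c ∧ (Sum.inl (i, c) : ZV k V) = .inl (j, b) := by
            rcases h : t.getLast? with _ | c
            · rw [h] at hl; simp at hl
            · rw [h] at hl; exact ⟨c, rfl, by simpa using hl⟩
          obtain ⟨rfl, rfl⟩ : i = j ∧ c = b := by simpa using hcb
          exact ⟨rfl, ⟨hct, hn.of_map _, hht, hc⟩, rfl⟩
        · rw [List.getLast?_concat] at hl
          simp at hl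
      obtain ⟨rfl, hp₁, rfl⟩ := key t₁ l₁ n₁ hl₁ hct₁ hht₁ hd₁
      obtain ⟨-, hp₂, rfl⟩ := key t₂ l₂ n₂ hl₂ hct₂ hht₂ hd₂
      rw [huniq a b t₁ t₂ hp₁ hp₂]
    · -- ends at a transversal vertex: both decompositions are the `++ [inr f]` form
      have key : ∀ (t : List V) (l : List (ZV k V)), l.Nodup → l.getLast? = some (.inr f) →
          t.Chain' A → t.head? = some a →
          (l = t.map (fun x => .inl (i, x)) ∨
            ∃ f' : Fin k → V, t.getLast? = some (f' i) ∧
              l = t.map (fun x => .inl (i, x)) ++ [.inr f']) →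
          DiPathFrom A t a (f i) ∧ l = t.map (fun x => .inl (i, x)) ++ [.inr f] := by
        rintro t l hn hl hct hht (rfl | ⟨f', hlf, rfl⟩)
        · rw [List.getLast?_map] at hl
          rcases h : t.getLast? with _ | c <;> rw [h] at hl <;> simp at hl
        · rw [List.getLast?_concat] at hl
          obtain rfl : f' = f := by simpa using hl
          refine ⟨⟨hct, (hn.of_append_left).of_map _, hht, hlf⟩, rfl⟩
      obtain ⟨hp₁, rfl⟩ := key t₁ l₁ n₁ hl₁ hct₁ hht₁ hd₁
      obtain ⟨hp₂, rfl⟩ := key t₂ l₂ n₂ hl₂ hct₂ hht₂ hd₂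
      rw [huniq a (f i) t₁ t₂ hp₁ hp₂]
  · -- start at a transversal vertex: path is a single vertex
    rw [inr_head c₁ hh₁, inr_head c₂ hh₂]

end Step

theorem exists_pack : ∀ k : ℕ, 1 ≤ k →
    ∃ (N : ℕ) (G : SimpleGraph (Fin N)) (A : Fin N → Fin N → Prop), GoodPack k (Fin N) G A := by
  intro k hk
  induction k, hk using Nat.le_induction with
  | base => exact ⟨1, ⊥, fun _ _ => False, base_pack⟩
  | succ n hn ih =>
    obtain ⟨N, G, A, p⟩ := ih
    have pack2 : GoodPack (n + 1) (ZV n (Fin N)) (ZG G) (ZA A) :=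
      { cf := ZG_cf p.cf
        col := ZG_col p.col
        lb := ZG_lb hn p.lb
        adj := zadj_iff p.adj
        asym := by
          rintro (⟨i, u⟩ | f) (⟨j, v⟩ | g) ⟨h1, h2⟩ <;> simp only [ZA] at h1 h2
          · exact p.asym u v ⟨h1.2, h2.2⟩
        acyc := ZA_acyc p.acyc
        uniq := ZA_uniq p.uniq }
    obtain ⟨G', A', p'⟩ := transport pack2 (Fintype.equivFin (ZV n (Fin N)))
    exact ⟨_, G', A', p'⟩

/-- For every `k ≥ 1` there is a finite triangle-free graph with chromatic number `k`
admitting an acyclic orientation in which any two vertices are joined by at most one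
directed path. -/
theorem stmt14 (k : ℕ) (hk : 1 ≤ k) :
    ∃ (N : ℕ) (G : SimpleGraph (Fin N)),
      G.CliqueFree 3 ∧ G.chromaticNumber = (k : ℕ∞) ∧
      ∃ A : Fin N → Fin N → Prop,
        (∀ u v, G.Adj u v ↔ (A u v ∨ A v u)) ∧
        (∀ u v, ¬ (A u v ∧ A v u)) ∧
        (∀ v, ¬ Relation.TransGen A v v) ∧
        (∀ (u v : Fin N) (l₁ l₂ : List (Fin N)),
          DiPathFrom A l₁ u v → DiPathFrom A l₂ u v → l₁ = l₂) := by
  obtain ⟨N, G, A, p⟩ := exists_pack k hk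
  refine ⟨N, G, p.cf, ?_, A, p.adj, p.asym, p.acyc, p.uniq⟩
  refine le_antisymm p.col.chromaticNumber_le ?_
  rw [SimpleGraph.chromaticNumber]
  exact le_iInf₂ fun n hn => by exact_mod_cast p.lb n hn
end

section
/- Let p be prime and n < p. In the graph G'_p constructed from a uniquely-path DAG G (edges uv for u < v with d(u,v) ≢ 0 mod p), every clique is a chain in the reachability order ≤, and for any clique {v_0 < v_1 < ... < v_k} the residues d(v_0, v_i) mod p for i = 0,...,k are pairwise distinct. -/
lemma reach_refl_s18 {V : Type*} (A : V → V → Prop) (x : V) : Reach A x x :=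
  ⟨[x], by simp [DiPathFrom, List.Chain']⟩

lemma transGen_of_path {V : Type*} {A : V → V → Prop} :
    ∀ (l : List V) (u v : V), DiPathFrom A l u v → u = v ∨ Relation.TransGen A u v := by
  intro l
  induction l with
  | nil => intro u v h; simp [DiPathFrom] at h
  | cons a rest ih =>
    intro u v h
    obtain ⟨hc, hn, hh, hl⟩ := h
    simp at hh; subst hh
    cases rest with
    | nil => simp at hl; left; exact hl
    | cons b rest' =>
      have hab : A a b := (List.isChain_cons_cons.mp hc).1
      have hrest : DiPathFrom A (b :: rest') b v :=
        ⟨(List.isChain_cons_cons.mp hc).2, hn.of_cons, rfl, by rw [← hl]; simp [List.getLast?]⟩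
      rcases ih b v hrest with h | h
      · subst h; right; exact Relation.TransGen.single hab
      · right; exact Relation.TransGen.head hab h

lemma transGen_of_reach {V : Type*} {A : V → V → Prop} {u v : V}
    (h : Reach A u v) (hne : u ≠ v) : Relation.TransGen A u v := by
  obtain ⟨l, hl⟩ := h
  rcases transGen_of_path l u v hl with h | h
  · exact absurd h hne
  · exact h

lemma not_reach_both {V : Type*} {A : V → V → Prop}
    (hacyc : ∀ x : V, ¬ Relation.TransGen A x x) {u v : V}
    (h1 : Reach A u v) (h2 : Reach A v u) (hne : u ≠ v) : False :=
  hacyc u ((transGen_of_reach h1 hne).trans (transGen_of_reach h2 hne.symm))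

lemma path_prefix {V : Type*} {A : V → V → Prop} :
    ∀ (l : List V) (u x : V), l.Chain' A → l.Nodup → l.head? = some u → x ∈ l →
      ∃ l', DiPathFrom A l' u x ∧ l' <+: l := by
  intro l
  induction l with
  | nil => intro u x _ _ _ hx; simp at hx
  | cons a rest ih =>
    intro u x hc hn hh hx
    simp at hh; subst hh
    rcases List.mem_cons.mp hx with rfl | hx
    · exact ⟨[x], by simp [DiPathFrom, List.Chain'], ⟨rest, rfl⟩⟩
    · cases rest with
      | nil => simp at hx
      | cons b rest' =>
        obtain ⟨l', hl', hpre⟩ := ih b x (List.isChain_cons_cons.mp hc).2 hn.of_cons rfl hx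
        have hhead : l'.head? = some b := hl'.2.2.1
        have hne : l' ≠ [] := by rintro rfl; simp at hhead
        refine ⟨a :: l', ⟨?_, ?_, rfl, ?_⟩, ?_⟩
        · rw [List.Chain', List.isChain_cons]
          refine ⟨?_, hl'.1⟩
          intro y hy
          rw [hhead] at hy; simp at hy; subst hy
          exact (List.isChain_cons_cons.mp hc).1
        · refine List.nodup_cons.mpr ⟨?_, hl'.2.1⟩
          intro ha
          exact (List.nodup_cons.mp hn).1 (hpre.subset ha)
        · cases l' with
          | nil => exact absurd rfl hne
          | cons c t => rw [List.getLast?_cons_cons]; exact hl'.2.2.2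
        · obtain ⟨t, ht⟩ := hpre
          exact ⟨t, by rw [List.cons_append, ht]⟩

lemma path_suffix {V : Type*} {A : V → V → Prop} :
    ∀ (l : List V) (v x : V), l.Chain' A → l.Nodup → l.getLast? = some v → x ∈ l →
      ∃ l', DiPathFrom A l' x v ∧ l' <:+ l := by
  intro l
  induction l with
  | nil => intro v x _ _ _ hx; simp at hx
  | cons a rest ih =>
    intro v x hc hn hl hx
    rcases List.mem_cons.mp hx with rfl | hx
    · exact ⟨x :: rest, ⟨hc, hn, rfl, hl⟩, List.suffix_refl _⟩
    · cases rest with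
      | nil => simp at hx
      | cons b rest' =>
        obtain ⟨l', hl', hsuf⟩ := ih v x (List.isChain_cons_cons.mp hc).2 hn.of_cons
          (by rw [← hl]; simp [List.getLast?]) hx
        exact ⟨l', hl', hsuf.trans (List.suffix_cons a _)⟩

lemma path_append {V : Type*} {A : V → V → Prop}
    (hacyc : ∀ x : V, ¬ Relation.TransGen A x x)
    {l₁ l₂ : List V} {u v w : V}
    (h₁ : DiPathFrom A l₁ u v) (h₂ : DiPathFrom A l₂ v w) :
    DiPathFrom A (l₁ ++ l₂.tail) u w ∧ (l₁ ++ l₂.tail).length + 1 = l₁.length + l₂.length := by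
  obtain ⟨hc₁, hn₁, hh₁, hl₁⟩ := h₁
  obtain ⟨hc₂, hn₂, hh₂, hl₂⟩ := h₂
  have hne₁ : l₁ ≠ [] := by rintro rfl; simp at hh₁
  cases l₂ with
  | nil => simp at hh₂
  | cons a rest =>
    simp at hh₂; subst hh₂
    cases rest with
    | nil =>
      simp at hl₂; subst hl₂
      have he : l₁ ++ (a :: List.nil).tail = l₁ := by simp
      rw [he]
      exact ⟨⟨hc₁, hn₁, hh₁, hl₁⟩, by simp⟩
    | cons c rest' =>
      have hvc : A a c := (List.isChain_cons_cons.mp hc₂).1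
      have hdisj : ∀ x ∈ l₁, x ∉ (c :: rest') := by
        intro x hx₁ hx₂
        have hx₂' : x ∈ a :: c :: rest' := List.mem_cons_of_mem a hx₂
        have hxne : x ≠ a := by
          rintro rfl
          exact (List.nodup_cons.mp hn₂).1 hx₂
        obtain ⟨la, hla, _⟩ := path_suffix l₁ a x hc₁ hn₁ hl₁ hx₁
        obtain ⟨lb, hlb, _⟩ := path_prefix (a :: c :: rest') a x hc₂ hn₂ rfl hx₂'
        exact not_reach_both hacyc ⟨la, hla⟩ ⟨lb, hlb⟩ hxne
      simp only [List.tail_cons]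
      refine ⟨⟨?_, ?_, ?_, ?_⟩, ?_⟩
      · refine hc₁.append ((List.isChain_cons_cons.mp hc₂).2) ?_
        intro x hx y hy
        rw [hl₁] at hx; simp at hx hy; subst hx; subst hy
        exact hvc
      · exact hn₁.append hn₂.of_cons hdisj
      · rw [List.head?_append_of_ne_nil _ hne₁]; exact hh₁
      · rw [List.getLast?_append_of_ne_nil _ (List.cons_ne_nil c rest')]
        rw [← hl₂, List.getLast?_cons_cons]
      · simp; omega

lemma d_additive {V : Type*} {A : V → V → Prop}
    (hacyc : ∀ x : V, ¬ Relation.TransGen A x x)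
    (d : V → V → ℕ)
    (hd : ∀ (u v : V) (l : List V), DiPathFrom A l u v → l.length = d u v + 1)
    {u v w : V} (h1 : Reach A u v) (h2 : Reach A v w) :
    d u w = d u v + d v w := by
  obtain ⟨l₁, hl₁⟩ := h1
  obtain ⟨l₂, hl₂⟩ := h2
  obtain ⟨hpath, hlen⟩ := path_append hacyc hl₁ hl₂
  have e1 := hd u v l₁ hl₁
  have e2 := hd v w l₂ hl₂
  have e3 := hd u w _ hpath
  omega

/-- In `G'_p`, every clique is a chain of the reachability order, and along any strictly
increasing chain of pairwise adjacent vertices `v_0 < v_1 < ⋯ < v_k` the residues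
`d(v_0, v_i) mod p` are pairwise distinct. -/
theorem stmt18 {V : Type*} [Fintype V] (A : V → V → Prop)
    (hacyc : ∀ x : V, ¬ Relation.TransGen A x x)
    (huniq : ∀ (u v : V) (l₁ l₂ : List V),
      DiPathFrom A l₁ u v → DiPathFrom A l₂ u v → l₁ = l₂)
    (d : V → V → ℕ)
    (hd : ∀ (u v : V) (l : List V), DiPathFrom A l u v → l.length = d u v + 1)
    (p : ℕ) (hp : p.Prime) (n : ℕ) (hnp : n < p)
    (s : Finset V) (hs : (shiftGraph A d p).IsClique ↑s) :
    (∀ u ∈ s, ∀ w ∈ s, Reach A u w ∨ Reach A w u) ∧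
    (∀ (k : ℕ) (v : Fin (k + 1) → V), (∀ i, v i ∈ s) →
      (∀ i j : Fin (k + 1), i < j → Reach A (v i) (v j) ∧ v i ≠ v j) →
      Function.Injective fun i : Fin (k + 1) => d (v 0) (v i) % p) := by
  constructor
  · intro u hu w hw
    by_cases huw : u = w
    · subst huw; exact Or.inl (reach_refl_s18 A u)
    · rcases (hs hu hw huw).2 with ⟨h, _⟩ | ⟨h, _⟩
      · exact Or.inl h
      · exact Or.inr h
  · intro k v hv1 hv2
    -- key: for i < j, d (v 0) (v i) % p ≠ d (v 0) (v j) % p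
    have key : ∀ i j : Fin (k + 1), i < j → d (v 0) (v i) % p ≠ d (v 0) (v j) % p := by
      intro i j hij heq
      obtain ⟨hreach, hne⟩ := hv2 i j hij
      have hadj := hs (hv1 i) (hv1 j) hne
      have hnd : ¬ p ∣ d (v i) (v j) := by
        rcases hadj.2 with ⟨_, h⟩ | ⟨h, _⟩
        · exact h
        · exact absurd (not_reach_both hacyc hreach h hne) not_false
      have h0i : Reach A (v 0) (v i) := by
        rcases eq_or_lt_of_le (Fin.zero_le i) with h0 | h0
        · rw [← h0]; exact reach_refl_s18 A (v 0)
        · exact (hv2 0 i h0).1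
      have hsum : d (v 0) (v j) = d (v 0) (v i) + d (v i) (v j) :=
        d_additive hacyc d hd h0i hreach
      rw [hsum] at heq
      have h1 : d (v 0) (v i) + d (v i) (v j) ≡ d (v 0) (v i) + 0 [MOD p] := by
        simpa [Nat.ModEq] using heq.symm
      exact hnd (Nat.modEq_zero_iff_dvd.mp (Nat.ModEq.add_left_cancel' _ h1))
    intro i j heq
    simp only at heq
    rcases lt_trichotomy i j with h | h | h
    · exact absurd heq (key i j h)
    · exact h
    · exact absurd heq.symm (key j i h)
end
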